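/- Let A ∈ ℝ^{n×n}, let U_{d+1} = [U_d, u_{d+1}] ∈ ℝ^{n×(d+1)} and let H̄_d ∈ ℝ^{(d+1)×d} have the block form H̄_d = [H_d; h_{d+1,d} e_d^T] with H_d ∈ ℝ^{d×d} and h_{d+1,d} ∈ ℝ, and assume the Arnoldi-type relation A U_d = U_{d+1} H̄_d holds. Let S ∈ ℝ^{s×n} and suppose S U_{d+1} = Q_{d+1} T_{d+1}, where Q_{d+1} = [Q_d, q] ∈ ℝ^{s×(d+1)} has orthonormal columns and T_{d+1} = [[T_d, t],[0, τ_{d+1}]] is upper triangular with T_d ∈ ℝ^{d×d} invertible. Then, with r := h_{d+1,d} T_d^{-1} t, the sketched Arnoldi relation S A U_d = S U_d (H_d + r e_d^T) + τ_{d+1} h_{d+1,d} q e_d^T holds, and moreover q is orthogonal to every column of S U_d. -/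

import Mathlib

open Matrix

/-- **Sketched Arnoldi relation** (Proposition 3.1).
`U1 = [U, u]` is `n × (d+2)` (we write the paper's `d` as `d+1` so that the last
index exists), `Hbar = [H; h·e_dᵀ]` and `A U = U1 Hbar` is the Arnoldi-type relation.
Given a thin QR decomposition `S U1 = Q1 T1` with `Q1 = [Q, q]` having orthonormal
columns and `T1 = [[T, t],[0, τ]]` upper triangular with `T` invertible, one has
`S A U = S U (H + r e_dᵀ) + τ h q e_dᵀ` with `r = h T⁻¹ t`, and `q` is orthogonal
to every column of `S U`. -/

private lemma mul_vecMulVec_aux {m p : Type*} {k : ℕ} [Fintype m]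
    (M : Matrix p (Fin k) ℝ) (v : Fin k → ℝ) (w : m → ℝ) :
    M * vecMulVec v w = vecMulVec (M.mulVec v) w := by
  ext i j
  simp [Matrix.mul_apply, Matrix.vecMulVec_apply, Matrix.mulVec, dotProduct,
    Finset.sum_mul, mul_assoc]

theorem sketched_arnoldi_relation
    {n s d : ℕ}
    (A : Matrix (Fin n) (Fin n) ℝ)
    (U : Matrix (Fin n) (Fin (d + 1)) ℝ) (u : Fin n → ℝ)
    (U1 : Matrix (Fin n) (Fin (d + 2)) ℝ)
    (hU1 : ∀ i, U1 i = Fin.snoc (U i) (u i))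
    (H : Matrix (Fin (d + 1)) (Fin (d + 1)) ℝ) (h : ℝ)
    (Hbar : Matrix (Fin (d + 2)) (Fin (d + 1)) ℝ)
    (hHbarTop : ∀ (i : Fin (d + 1)) (j : Fin (d + 1)), Hbar i.castSucc j = H i j)
    (hHbarBot : ∀ j : Fin (d + 1),
      Hbar (Fin.last (d + 1)) j = h * (Pi.single (Fin.last d) 1 : Fin (d + 1) → ℝ) j)
    (hArnoldi : A * U = U1 * Hbar)
    (S : Matrix (Fin s) (Fin n) ℝ)
    (Q : Matrix (Fin s) (Fin (d + 1)) ℝ) (q : Fin s → ℝ)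
    (Q1 : Matrix (Fin s) (Fin (d + 2)) ℝ)
    (hQ1 : ∀ i, Q1 i = Fin.snoc (Q i) (q i))
    (hQorth : Q1ᵀ * Q1 = 1)
    (T : Matrix (Fin (d + 1)) (Fin (d + 1)) ℝ) (t : Fin (d + 1) → ℝ) (τ : ℝ)
    (T1 : Matrix (Fin (d + 2)) (Fin (d + 2)) ℝ)
    (hT1a : ∀ i j : Fin (d + 1), T1 i.castSucc j.castSucc = T i j)
    (hT1b : ∀ i : Fin (d + 1), T1 i.castSucc (Fin.last (d + 1)) = t i)
    (hT1c : ∀ j : Fin (d + 1), T1 (Fin.last (d + 1)) j.castSucc = 0)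
    (hT1d : T1 (Fin.last (d + 1)) (Fin.last (d + 1)) = τ)
    (hT1upper : ∀ i j : Fin (d + 2), j < i → T1 i j = 0)
    (hQR : S * U1 = Q1 * T1)
    (hTdet : T.det ≠ 0) :
    S * A * U =
        S * U * (H + vecMulVec (h • T⁻¹.mulVec t) (Pi.single (Fin.last d) 1 : Fin (d + 1) → ℝ))
          + (τ * h) • vecMulVec q (Pi.single (Fin.last d) 1 : Fin (d + 1) → ℝ)
      ∧ ∀ j : Fin (d + 1), dotProduct q (fun i => (S * U) i j) = 0 := by
  have hTunit : IsUnit T.det := isUnit_iff_ne_zero.mpr hTdet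
  have hTinv : T * T⁻¹ = 1 := Matrix.mul_nonsing_inv T hTunit
  have hSU : S * U = Q * T := by
    ext i j
    have h1 := congrFun (congrFun hQR i) j.castSucc
    simp only [Matrix.mul_apply, hU1, hQ1, Fin.snoc_castSucc] at h1 ⊢
    rw [Fin.sum_univ_castSucc] at h1
    simp only [Fin.snoc_castSucc, Fin.snoc_last, hT1a, hT1c, mul_zero, add_zero] at h1
    exact h1
  have hSuv : S.mulVec u = Q.mulVec t + τ • q := by
    funext i
    have h1 := congrFun (congrFun hQR i) (Fin.last (d + 1))
    simp only [Matrix.mul_apply, hU1, hQ1, Fin.snoc_last] at h1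
    rw [Fin.sum_univ_castSucc] at h1
    simp only [Fin.snoc_castSucc, Fin.snoc_last, hT1b, hT1d] at h1
    simp only [Matrix.mulVec, dotProduct, Pi.add_apply, Pi.smul_apply, smul_eq_mul]
    rw [h1]; ring
  have hQq : ∀ k : Fin (d + 1), (∑ i, q i * Q i k) = 0 := by
    intro k
    have hne : Fin.last (d + 1) ≠ k.castSucc := (Fin.castSucc_lt_last k).ne'
    have h1 := congrFun (congrFun hQorth (Fin.last (d + 1))) k.castSucc
    simp only [Matrix.mul_apply, Matrix.transpose_apply, hQ1, Fin.snoc_last, Fin.snoc_castSucc,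
      Matrix.one_apply, if_neg hne] at h1
    exact h1
  have hU1Hbar : U1 * Hbar
      = U * H + vecMulVec (h • u) (Pi.single (Fin.last d) 1 : Fin (d + 1) → ℝ) := by
    ext i j
    simp only [Matrix.mul_apply, Matrix.add_apply, Matrix.vecMulVec_apply, Pi.smul_apply,
      smul_eq_mul, hU1]
    rw [Fin.sum_univ_castSucc]
    simp only [Fin.snoc_castSucc, Fin.snoc_last, hHbarTop, hHbarBot]
    ring
  have key : (S * U).mulVec (h • T⁻¹.mulVec t) = h • Q.mulVec t := by
    rw [hSU, Matrix.mulVec_smul, Matrix.mulVec_mulVec, Matrix.mul_assoc, hTinv, Matrix.mul_one]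
  constructor
  · have e1 : S * A * U
        = S * U * H + vecMulVec (S.mulVec (h • u)) (Pi.single (Fin.last d) 1 : Fin (d + 1) → ℝ) := by
      calc S * A * U = S * (U1 * Hbar) := by rw [Matrix.mul_assoc, hArnoldi]
        _ = S * (U * H) + S * vecMulVec (h • u) (Pi.single (Fin.last d) 1) := by
            rw [hU1Hbar, Matrix.mul_add]
        _ = _ := by rw [mul_vecMulVec_aux, ← Matrix.mul_assoc]
    rw [e1, Matrix.mul_add, mul_vecMulVec_aux, key]
    ext i j
    simp only [Matrix.add_apply, Matrix.smul_apply, Matrix.vecMulVec_apply, Pi.smul_apply,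
      smul_eq_mul, Matrix.mulVec_smul, hSuv, Pi.add_apply]
    ring
  · intro j
    rw [hSU]
    simp only [dotProduct, Matrix.mul_apply, Finset.mul_sum]
    rw [Finset.sum_comm]
    refine Finset.sum_eq_zero fun k _ => ?_
    simp only [← mul_assoc]
    rw [← Finset.sum_mul, hQq k, zero_mul]
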